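/- arXiv:1508.07450 — 4 statements merged into one kernel-verified Lean document; each statement's English description precedes it below -/
import Mathlib

section
/- Let {(W_i, v_i)}_{i∈I} be a fusion frame for H with bounds A and B, and let U be a bounded invertible operator on H. Then {(U W_i, v_i)}_{i∈I} is a fusion frame for H with bounds A/(‖U‖²‖U⁻¹‖²) and B‖U‖²‖U⁻¹‖². -/
/-- Key lemma: `‖P_W (T† x)‖ ≤ ‖T‖ * ‖P_{T W} x‖`. -/
lemma key_proj_adjoint {𝕜 H : Type*} [RCLike 𝕜] [NormedAddCommGroup H]
    [InnerProductSpace 𝕜 H] [CompleteSpace H]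
    (W : Submodule 𝕜 H) [CompleteSpace W] (T : H →L[𝕜] H) (x : H)
    (V : Submodule 𝕜 H) [CompleteSpace V] (hV : W.map (T : H →ₗ[𝕜] H) = V) :
    ‖(Submodule.orthogonalProjectionOnto W (ContinuousLinearMap.adjoint T x) : H)‖ ≤
      ‖T‖ * ‖(Submodule.orthogonalProjectionOnto V x : H)‖ := by
  have hsub := Submodule.sub_starProjection_mem_orthogonal (K := V) x
  have hmem : ContinuousLinearMap.adjoint T (x - (Submodule.orthogonalProjectionOnto V x : H)) ∈ Wᗮ := by
    intro w hw
    rw [ContinuousLinearMap.adjoint_inner_right]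
    exact hsub _ (hV ▸ Submodule.mem_map_of_mem hw)
  have heq : Submodule.orthogonalProjectionOnto W (ContinuousLinearMap.adjoint T x) =
      Submodule.orthogonalProjectionOnto W (ContinuousLinearMap.adjoint T (Submodule.orthogonalProjectionOnto V x : H)) := by
    refine sub_eq_zero.mp ?_
    rw [← map_sub]
    have h0 := Submodule.orthogonalProjectionOnto_apply_of_mem_orthogonal hmem
    rw [map_sub] at h0
    exact h0
  rw [heq]
  calc ‖(Submodule.orthogonalProjectionOnto W (ContinuousLinearMap.adjoint T (Submodule.orthogonalProjectionOnto V x : H)) : H)‖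
      ≤ ‖ContinuousLinearMap.adjoint T (Submodule.orthogonalProjectionOnto V x : H)‖ := by
        simpa using (Submodule.orthogonalProjectionOnto W).le_opNorm _ |>.trans
          (by nlinarith [Submodule.orthogonalProjectionOnto_norm_le (K := W),
            norm_nonneg (ContinuousLinearMap.adjoint T (V.starProjection x))])
    _ ≤ ‖ContinuousLinearMap.adjoint T‖ * ‖(Submodule.orthogonalProjectionOnto V x : H)‖ :=
        (ContinuousLinearMap.adjoint T).le_opNorm _
    _ = ‖T‖ * ‖(Submodule.orthogonalProjectionOnto V x : H)‖ := by rw [LinearIsometryEquiv.norm_map]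
set_option maxHeartbeats 1000000 in
/-- If `{(W_i, v_i)}_{i∈I}` is a fusion frame for `H` with bounds `A` and `B` and `U` is a
bounded invertible operator on `H`, then `{(U W_i, v_i)}_{i∈I}` is a fusion frame for `H`
with bounds `A/(‖U‖²‖U⁻¹‖²)` and `B‖U‖²‖U⁻¹‖²`. -/
theorem fusion_frame_invertible_image
    {𝕜 H : Type*} [RCLike 𝕜] [NormedAddCommGroup H] [InnerProductSpace 𝕜 H]
    [CompleteSpace H] {I : Type*} [Countable I]
    (W : I → Submodule 𝕜 H) [∀ i, CompleteSpace ↥(W i)]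
    (U : H ≃L[𝕜] H)
    [∀ i, CompleteSpace ↥((W i).map ((U : H →L[𝕜] H) : H →ₗ[𝕜] H))]
    (v : I → ℝ) (hv : ∀ i, 0 < v i)
    (A B : ℝ) (hA : 0 < A) (hAB : A ≤ B)
    (hframe : ∀ x : H,
      A * ‖x‖ ^ 2 ≤ ∑' i, (v i) ^ 2 * ‖(Submodule.orthogonalProjectionOnto (W i) x : H)‖ ^ 2 ∧
      ∑' i, (v i) ^ 2 * ‖(Submodule.orthogonalProjectionOnto (W i) x : H)‖ ^ 2 ≤ B * ‖x‖ ^ 2) :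
    ∀ x : H,
      A / (‖(U : H →L[𝕜] H)‖ ^ 2 * ‖(U.symm : H →L[𝕜] H)‖ ^ 2) * ‖x‖ ^ 2 ≤
        ∑' i, (v i) ^ 2 *
          ‖(Submodule.orthogonalProjectionOnto ((W i).map ((U : H →L[𝕜] H) : H →ₗ[𝕜] H)) x : H)‖ ^ 2 ∧
      ∑' i, (v i) ^ 2 *
          ‖(Submodule.orthogonalProjectionOnto ((W i).map ((U : H →L[𝕜] H) : H →ₗ[𝕜] H)) x : H)‖ ^ 2 ≤
        B * (‖(U : H →L[𝕜] H)‖ ^ 2 * ‖(U.symm : H →L[𝕜] H)‖ ^ 2) * ‖x‖ ^ 2 := by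
  intro x
  set T : H →L[𝕜] H := (U : H →L[𝕜] H) with hT
  set S : H →L[𝕜] H := (U.symm : H →L[𝕜] H) with hS
  set V : I → Submodule 𝕜 H := fun i => (W i).map (T : H →ₗ[𝕜] H) with hV
  set y : H := ContinuousLinearMap.adjoint T x with hy
  -- adjoint S ∘ adjoint T = id
  have hTS : T.comp S = ContinuousLinearMap.id 𝕜 H := by ext z; simp [hT, hS]
  have hSTadj : ContinuousLinearMap.adjoint S y = x := by
    rw [hy, ← ContinuousLinearMap.comp_apply, ← ContinuousLinearMap.adjoint_comp, hTS,
      ContinuousLinearMap.adjoint_id, ContinuousLinearMap.id_apply]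
  have hmap : ∀ i, (V i).map (S : H →ₗ[𝕜] H) = W i := by
    intro i
    show ((W i).map (T : H →ₗ[𝕜] H)).map (S : H →ₗ[𝕜] H) = W i
    rw [← Submodule.map_comp]
    have hid : ((S : H →ₗ[𝕜] H).comp (T : H →ₗ[𝕜] H)) = LinearMap.id := by
      ext z; simp [hT, hS]
    rw [hid, Submodule.map_id]
  set s : I → ℝ := fun i => (v i) ^ 2 * ‖(Submodule.orthogonalProjectionOnto (V i) x : H)‖ ^ 2 with hs
  set t : I → ℝ := fun i => (v i) ^ 2 * ‖(Submodule.orthogonalProjectionOnto (W i) y : H)‖ ^ 2 with ht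
  have h1 : ∀ i, ‖(Submodule.orthogonalProjectionOnto (W i) y : H)‖ ≤
      ‖T‖ * ‖(Submodule.orthogonalProjectionOnto (V i) x : H)‖ := fun i =>
    key_proj_adjoint (W i) T x (V i) rfl
  have h2 : ∀ i, ‖(Submodule.orthogonalProjectionOnto (V i) x : H)‖ ≤
      ‖S‖ * ‖(Submodule.orthogonalProjectionOnto (W i) y : H)‖ := by
    intro i
    have := key_proj_adjoint (V i) S y (W i) (hmap i)
    rwa [hSTadj] at this
  have hts : ∀ i, t i ≤ ‖T‖ ^ 2 * s i := by
    intro i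
    have hp := pow_le_pow_left₀ (norm_nonneg _) (h1 i) 2
    rw [mul_pow] at hp
    have := mul_le_mul_of_nonneg_left hp (sq_nonneg (v i))
    show (v i) ^ 2 * ‖(Submodule.orthogonalProjectionOnto (W i) y : H)‖ ^ 2 ≤
      ‖T‖ ^ 2 * ((v i) ^ 2 * ‖(Submodule.orthogonalProjectionOnto (V i) x : H)‖ ^ 2)
    linarith [this]
  have hst : ∀ i, s i ≤ ‖S‖ ^ 2 * t i := by
    intro i
    have hp := pow_le_pow_left₀ (norm_nonneg _) (h2 i) 2
    rw [mul_pow] at hp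
    have := mul_le_mul_of_nonneg_left hp (sq_nonneg (v i))
    show (v i) ^ 2 * ‖(Submodule.orthogonalProjectionOnto (V i) x : H)‖ ^ 2 ≤
      ‖S‖ ^ 2 * ((v i) ^ 2 * ‖(Submodule.orthogonalProjectionOnto (W i) y : H)‖ ^ 2)
    linarith [this]
  have hsnn : ∀ i, 0 ≤ s i := fun i => by positivity
  have htnn : ∀ i, 0 ≤ t i := fun i => by positivity
  have hframey := hframe y
  rcases subsingleton_or_nontrivial H with hH | hH
  · have hx0 : x = 0 := Subsingleton.elim _ _
    subst hx0
    have hz : ∀ i, s i = 0 := by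
      intro i
      show (v i) ^ 2 * ‖(Submodule.orthogonalProjectionOnto (V i) (0 : H) : H)‖ ^ 2 = 0
      rw [map_zero]
      simp
    have hzz : ∑' i, s i = 0 := by rw [tsum_congr hz, tsum_zero]
    have hzz' : (∑' i, (v i) ^ 2 *
        ‖(Submodule.orthogonalProjectionOnto ((W i).map ((U : H →L[𝕜] H) : H →ₗ[𝕜] H)) (0:H) : H)‖ ^ 2) = 0 := hzz
    rw [hzz']
    constructor
    · simp
    · simp
  have hTpos : 0 < ‖T‖ := by
    obtain ⟨z, hz⟩ := exists_ne (0 : H)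
    have hTz : T z ≠ 0 := by
      intro h0
      exact hz (by simpa [hT] using congrArg U.symm h0)
    exact norm_pos_iff.mpr (fun h => hTz (by rw [h]; simp))
  have hSpos : 0 < ‖S‖ := by
    obtain ⟨z, hz⟩ := exists_ne (0 : H)
    have hSz : S z ≠ 0 := by
      intro h0
      exact hz (by simpa [hS] using congrArg U h0)
    exact norm_pos_iff.mpr (fun h => hSz (by rw [h]; simp))
  by_cases hsum : Summable t
  · have hsums : Summable s :=
      Summable.of_nonneg_of_le hsnn hst (hsum.mul_left _)
    have hyx : ‖y‖ ≤ ‖T‖ * ‖x‖ := by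
      have := (ContinuousLinearMap.adjoint T).le_opNorm x
      rwa [LinearIsometryEquiv.norm_map] at this
    have hxy : ‖x‖ ≤ ‖S‖ * ‖y‖ := by
      have := (ContinuousLinearMap.adjoint S).le_opNorm y
      rwa [LinearIsometryEquiv.norm_map, hSTadj] at this
    have hub : ∑' i, s i ≤ ‖S‖ ^ 2 * ∑' i, t i := by
      calc ∑' i, s i ≤ ∑' i, ‖S‖ ^ 2 * t i :=
            Summable.tsum_le_tsum hst hsums (hsum.mul_left _)
        _ = ‖S‖ ^ 2 * ∑' i, t i := tsum_mul_left
    have hlb : ∑' i, t i ≤ ‖T‖ ^ 2 * ∑' i, s i := by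
      calc ∑' i, t i ≤ ∑' i, ‖T‖ ^ 2 * s i :=
            Summable.tsum_le_tsum hts hsum (hsums.mul_left _)
        _ = ‖T‖ ^ 2 * ∑' i, s i := tsum_mul_left
    constructor
    · -- lower bound
      show A / (‖T‖ ^ 2 * ‖S‖ ^ 2) * ‖x‖ ^ 2 ≤ ∑' i, s i
      have h3 : A * ‖y‖ ^ 2 ≤ ‖T‖ ^ 2 * ∑' i, s i := le_trans hframey.1 hlb
      have h4 : ‖x‖ ^ 2 ≤ ‖S‖ ^ 2 * ‖y‖ ^ 2 := by nlinarith [norm_nonneg x, norm_nonneg y]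
      rw [div_mul_eq_mul_div, div_le_iff₀ (by positivity)]
      have e1 : A * ‖x‖ ^ 2 ≤ A * (‖S‖ ^ 2 * ‖y‖ ^ 2) := mul_le_mul_of_nonneg_left h4 hA.le
      have e2 : ‖S‖ ^ 2 * (A * ‖y‖ ^ 2) ≤ ‖S‖ ^ 2 * (‖T‖ ^ 2 * ∑' i, s i) :=
        mul_le_mul_of_nonneg_left h3 (sq_nonneg _)
      linarith [e1, e2]
    · -- upper bound
      show (∑' i, s i) ≤ B * (‖T‖ ^ 2 * ‖S‖ ^ 2) * ‖x‖ ^ 2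
      have h3 : ∑' i, t i ≤ B * ‖y‖ ^ 2 := hframey.2
      have h4 : ‖y‖ ^ 2 ≤ ‖T‖ ^ 2 * ‖x‖ ^ 2 := by nlinarith [norm_nonneg x, norm_nonneg y]
      have hB : 0 < B := lt_of_lt_of_le hA hAB
      have e1 : ‖S‖ ^ 2 * ∑' i, t i ≤ ‖S‖ ^ 2 * (B * ‖y‖ ^ 2) :=
        mul_le_mul_of_nonneg_left h3 (sq_nonneg _)
      have e2 : ‖S‖ ^ 2 * (B * ‖y‖ ^ 2) ≤ ‖S‖ ^ 2 * (B * (‖T‖ ^ 2 * ‖x‖ ^ 2)) :=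
        mul_le_mul_of_nonneg_left (mul_le_mul_of_nonneg_left h4 hB.le) (sq_nonneg _)
      linarith [hub, e1, e2]
  · -- t not summable: forces y = 0, hence x = 0
    have h0 : ∑' i, t i = 0 := tsum_eq_zero_of_not_summable hsum
    have hy0 : y = 0 := by
      have := hframey.1
      rw [h0] at this
      have : ‖y‖ ^ 2 ≤ 0 := by nlinarith
      have : ‖y‖ = 0 := by nlinarith [norm_nonneg y]
      exact norm_eq_zero.mp this
    have hx0 : x = 0 := by rw [← hSTadj, hy0, map_zero]
    subst hx0
    have hz : ∀ i, s i = 0 := by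
      intro i
      show (v i) ^ 2 * ‖(Submodule.orthogonalProjectionOnto (V i) (0 : H) : H)‖ ^ 2 = 0
      rw [map_zero]
      simp
    have hzz : ∑' i, s i = 0 := by rw [tsum_congr hz, tsum_zero]
    have hzz' : (∑' i, (v i) ^ 2 *
        ‖(Submodule.orthogonalProjectionOnto ((W i).map ((U : H →L[𝕜] H) : H →ₗ[𝕜] H)) (0:H) : H)‖ ^ 2) = 0 := hzz
    rw [hzz']
    constructor
    · simp
    · simp
end

section
/- A family of closed subspaces {W_i}_{i∈I} of a Hilbert space H is an orthonormal fusion basis (H = ⊕_{i∈I} W_i as an orthogonal direct sum) if and only if {(W_i, 1)}_{i∈I} is a Parseval fusion frame, i.e., Σ_{i∈I} ‖P_{W_i} x‖² = ‖x‖² for all x ∈ H. -/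
open scoped InnerProductSpace

/-- A family of closed subspaces `{W_i}_{i∈I}` of a Hilbert space `H` is an orthonormal
fusion basis (the subspaces are mutually orthogonal and their closed span is `H`) if and
only if `{(W_i, 1)}_{i∈I}` is a Parseval fusion frame, i.e.
`Σ_i ‖P_{W_i} x‖² = ‖x‖² for all `x ∈ H`. -/
theorem orthonormal_fusion_basis_iff_parseval
    {𝕜 H : Type*} [RCLike 𝕜] [NormedAddCommGroup H] [InnerProductSpace 𝕜 H]
    [CompleteSpace H] {I : Type*} [Countable I]
    (W : I → Submodule 𝕜 H) [∀ i, CompleteSpace ↥(W i)] :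
    ((∀ i j, i ≠ j → ∀ f ∈ W i, ∀ g ∈ W j, ⟪f, g⟫_𝕜 = 0) ∧
      (⨆ i, W i).topologicalClosure = ⊤) ↔
    (∀ x : H, ∑' i, ‖((W i).orthogonalProjection x : H)‖ ^ 2 = ‖x‖ ^ 2) := by
  classical
  constructor
  · rintro ⟨h1, h2⟩ x
    have hV : OrthogonalFamily 𝕜 (fun i => W i) (fun i => (W i).subtypeₗᵢ) := by
      intro i j hij v w
      exact h1 i j hij v v.2 w w.2
    have hS : IsHilbertSum 𝕜 (fun i => W i) (fun i => (W i).subtypeₗᵢ) :=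
      IsHilbertSum.mkInternal W hV h2.ge
    set w := hS.linearIsometryEquiv x with hw
    have hx : HasSum (fun j => ((w j : W j) : H)) x := by
      simpa [hw] using hS.hasSum_linearIsometryEquiv_symm w
    have hproj : ∀ i, ((W i).orthogonalProjection x : H) = (w i : H) := by
      intro i
      have hsum : HasSum (fun j => (((W i).orthogonalProjection ((w j : W j) : H) : W i) : H))
          (((W i).orthogonalProjection x : H)) := by
        exact ((W i).subtypeL.comp ((W i).orthogonalProjection)).hasSum hx
      have heq : (fun j => (((W i).orthogonalProjection ((w j : W j) : H) : W i) : H)) =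
          fun j => if j = i then ((w i : W i) : H) else 0 := by
        funext j
        by_cases hji : j = i
        · subst hji
          simp [Submodule.orthogonalProjectionOnto_mem_subspace_eq_self]
        · have hmem : ((w j : W j) : H) ∈ (W i)ᗮ := by
            intro u hu
            exact h1 i j (Ne.symm hji) u hu _ (w j).2
          simp [hji, Submodule.orthogonalProjectionOnto_apply_of_mem_orthogonal hmem]
      rw [heq] at hsum
      exact hsum.unique (hasSum_ite_eq i _)
    have hnorm : ‖w‖ ^ (2 : ℝ) = ∑' i, ‖w i‖ ^ (2 : ℝ) := by
      simpa using lp.norm_rpow_eq_tsum (p := 2) (by norm_num) w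
    have hwx : ‖w‖ = ‖x‖ := hS.linearIsometryEquiv.norm_map x
    calc ∑' i, ‖((W i).orthogonalProjection x : H)‖ ^ 2
        = ∑' i, ‖w i‖ ^ (2 : ℝ) := by
          refine tsum_congr fun i => ?_
          rw [hproj i]
          rw [← Real.rpow_natCast ‖(w i : H)‖ 2]
          norm_num
      _ = ‖w‖ ^ (2 : ℝ) := hnorm.symm
      _ = ‖x‖ ^ 2 := by rw [hwx, ← Real.rpow_natCast ‖x‖ 2]; norm_num
  · intro hP
    classical
  constructor
    · intro i j hij f hf g hg
      have hPf := hP f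
      have hfi : ((W i).orthogonalProjection f : H) = f := by
        simp [Submodule.starProjection_eq_self_iff.mpr hf]
      have hPj : ((W j).orthogonalProjection f : H) = 0 := by
        by_cases hs : Summable (fun k => ‖((W k).orthogonalProjection f : H)‖ ^ 2)
        · have hle : ∑ k ∈ ({i, j} : Finset I), ‖((W k).orthogonalProjection f : H)‖ ^ 2 ≤
              ∑' k, ‖((W k).orthogonalProjection f : H)‖ ^ 2 :=
            Summable.sum_le_tsum _ (fun k _ => by positivity) hs
          rw [Finset.sum_pair hij, hfi, hPf] at hle
          have : ‖((W j).orthogonalProjection f : H)‖ ^ 2 ≤ 0 := by linarith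
          have hz : ‖((W j).orthogonalProjection f : H)‖ = 0 := by nlinarith [norm_nonneg (((W j).orthogonalProjection f : H)), sq_nonneg ‖((W j).orthogonalProjection f : H)‖]
          exact norm_eq_zero.mp hz
        · rw [tsum_eq_zero_of_not_summable hs] at hPf
          have : f = 0 := by
            have := hPf.symm
            have h0 : ‖f‖ = 0 := by nlinarith [norm_nonneg f]
            exact norm_eq_zero.mp h0
          simp [this]
      have hforth : f ∈ (W j)ᗮ := Submodule.orthogonalProjectionOnto_eq_zero_iff.mp (by
        exact_mod_cast Subtype.ext hPj)
      have := (Submodule.mem_orthogonal' (W j) f).mp hforth g hg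
      exact this
    · rw [Submodule.topologicalClosure_eq_top_iff]
      rw [← Submodule.iInf_orthogonal]
      rw [Submodule.eq_bot_iff]
      intro x hx
      have hxz : ∀ i, ((W i).orthogonalProjection x : H) = 0 := by
        intro i
        have hxi : x ∈ (W i)ᗮ := by
          exact (Submodule.mem_iInf _).mp hx i
        simpa using congrArg (Subtype.val) (Submodule.orthogonalProjectionOnto_eq_zero_iff.mpr hxi)
      have := hP x
      rw [tsum_congr (fun i => by rw [hxz i])] at this
      simp at this
      have h0 : ‖x‖ = 0 := by nlinarith [norm_nonneg x]
      exact norm_eq_zero.mp h0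
end

section
/- Let W = {(W_i, v_i)}_{i=1}^N be a fusion frame for Hⁿ and T a bounded invertible operator on Hⁿ. Then the redundancies satisfy R_W^± · k(T)⁻² ≤ R_{T(W)}^± ≤ R_W^± · k(T)², where k(T) = ‖T‖·‖T⁻¹‖ is the condition number of T. -/
section Aux
open scoped ComplexConjugate
open ContinuousLinearMap

variable {𝕜 H : Type*} [RCLike 𝕜] [NormedAddCommGroup H] [InnerProductSpace 𝕜 H]
  [FiniteDimensional 𝕜 H] [CompleteSpace H]

local notation "⟪" x ", " y "⟫" => @inner 𝕜 _ _ x y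

lemma aux_div (a c : ℝ) (ha : 0 ≤ a) (hcb : 0 ≤ c) (h : a ^ 2 ≤ c * a) : a ≤ c := by
  rcases eq_or_lt_of_le ha with h0 | h0
  · simpa [← h0] using hcb
  · nlinarith

lemma proj_map_le (V : Submodule 𝕜 H) (T : H ≃L[𝕜] H) (x : H) :
    ‖(Submodule.orthogonalProjectionOnto (V.map ((T : H →L[𝕜] H) : H →ₗ[𝕜] H)) x : H)‖ ≤
      ‖(T.symm : H →L[𝕜] H)‖ *
        ‖(Submodule.orthogonalProjectionOnto V (adjoint (T : H →L[𝕜] H) x) : H)‖ := by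
  set M := V.map ((T : H →L[𝕜] H) : H →ₗ[𝕜] H) with hM
  set w : H := (Submodule.orthogonalProjectionOnto M x : H) with hw
  set z : H := (Submodule.orthogonalProjectionOnto V (adjoint (T : H →L[𝕜] H) x) : H) with hz
  obtain ⟨u, huV, hu⟩ : w ∈ M := (Submodule.orthogonalProjectionOnto M x).2
  have hu' : (T : H →L[𝕜] H) u = w := hu
  have hwM : w ∈ M := (Submodule.orthogonalProjectionOnto M x).2
  have h1 : ⟪x - w, w⟫ = 0 := Submodule.starProjection_inner_eq_zero x w hwM
  have h2 : ⟪adjoint (T : H →L[𝕜] H) x - z, u⟫ = 0 :=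
    Submodule.starProjection_inner_eq_zero _ u huV
  have hxw : ⟪x, w⟫ = ⟪w, w⟫ := by
    have := h1; rw [inner_sub_left, sub_eq_zero] at this; exact this
  have hxz : ⟪x, w⟫ = ⟪z, u⟫ := by
    rw [inner_sub_left, sub_eq_zero] at h2
    calc ⟪x, w⟫ = ⟪x, (T : H →L[𝕜] H) u⟫ := by rw [hu']
    _ = ⟪adjoint (T : H →L[𝕜] H) x, u⟫ := (adjoint_inner_left _ _ _).symm
    _ = ⟪z, u⟫ := h2
  have hnu : ‖u‖ ≤ ‖(T.symm : H →L[𝕜] H)‖ * ‖w‖ := by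
    have : u = (T.symm : H →L[𝕜] H) w := by
      rw [← hu']; simp
    rw [this]; exact (T.symm : H →L[𝕜] H).le_opNorm w
  have key : ‖w‖ ^ 2 ≤ (‖(T.symm : H →L[𝕜] H)‖ * ‖z‖) * ‖w‖ := by
    have : ‖w‖ ^ 2 = RCLike.re ⟪w, w⟫ := by
      rw [← inner_self_eq_norm_sq (𝕜 := 𝕜)]
    rw [this, ← hxw, hxz]
    calc RCLike.re ⟪z, u⟫ ≤ ‖⟪z, u⟫‖ := RCLike.re_le_norm _
    _ ≤ ‖z‖ * ‖u‖ := norm_inner_le_norm _ _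
    _ ≤ ‖z‖ * (‖(T.symm : H →L[𝕜] H)‖ * ‖w‖) := by
        exact mul_le_mul_of_nonneg_left hnu (norm_nonneg _)
    _ = (‖(T.symm : H →L[𝕜] H)‖ * ‖z‖) * ‖w‖ := by ring
  exact aux_div _ _ (norm_nonneg _)
    (mul_nonneg (norm_nonneg _) (norm_nonneg _)) key

lemma proj_map_ge (V : Submodule 𝕜 H) (T : H ≃L[𝕜] H) (x : H) :
    ‖(Submodule.orthogonalProjectionOnto V (adjoint (T : H →L[𝕜] H) x) : H)‖ ≤
      ‖(T : H →L[𝕜] H)‖ *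
        ‖(Submodule.orthogonalProjectionOnto (V.map ((T : H →L[𝕜] H) : H →ₗ[𝕜] H)) x : H)‖ := by
  set M := V.map ((T : H →L[𝕜] H) : H →ₗ[𝕜] H) with hM
  set w : H := (Submodule.orthogonalProjectionOnto M x : H) with hw
  set z : H := (Submodule.orthogonalProjectionOnto V (adjoint (T : H →L[𝕜] H) x) : H) with hz
  have hzV : z ∈ V := (Submodule.orthogonalProjectionOnto V _).2
  have hTzM : (T : H →L[𝕜] H) z ∈ M := ⟨z, hzV, rfl⟩
  have h1 : ⟪x - w, (T : H →L[𝕜] H) z⟫ = 0 :=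
    Submodule.starProjection_inner_eq_zero x _ hTzM
  have h2 : ⟪adjoint (T : H →L[𝕜] H) x - z, z⟫ = 0 :=
    Submodule.starProjection_inner_eq_zero _ z hzV
  rw [inner_sub_left, sub_eq_zero] at h1 h2
  have hzz : ⟪z, z⟫ = ⟪w, (T : H →L[𝕜] H) z⟫ := by
    rw [← h2, adjoint_inner_left]; exact h1
  have key : ‖z‖ ^ 2 ≤ (‖(T : H →L[𝕜] H)‖ * ‖w‖) * ‖z‖ := by
    have : ‖z‖ ^ 2 = RCLike.re ⟪z, z⟫ := by
      rw [← inner_self_eq_norm_sq (𝕜 := 𝕜)]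
    rw [this, hzz]
    calc RCLike.re ⟪w, (T : H →L[𝕜] H) z⟫ ≤ ‖⟪w, (T : H →L[𝕜] H) z⟫‖ := RCLike.re_le_norm _
    _ ≤ ‖w‖ * ‖(T : H →L[𝕜] H) z‖ := norm_inner_le_norm _ _
    _ ≤ ‖w‖ * (‖(T : H →L[𝕜] H)‖ * ‖z‖) :=
        mul_le_mul_of_nonneg_left ((T : H →L[𝕜] H).le_opNorm z) (norm_nonneg _)
    _ = (‖(T : H →L[𝕜] H)‖ * ‖w‖) * ‖z‖ := by ring
  exact aux_div _ _ (norm_nonneg _)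
    (mul_nonneg (norm_nonneg _) (norm_nonneg _)) key

lemma sum_proj_map_le {N : ℕ} (W : Fin N → Submodule 𝕜 H) (T : H ≃L[𝕜] H) (x : H) :
    ∑ i, ‖(Submodule.orthogonalProjectionOnto ((W i).map ((T : H →L[𝕜] H) : H →ₗ[𝕜] H)) x : H)‖ ^ 2 ≤
      ‖(T.symm : H →L[𝕜] H)‖ ^ 2 *
        ∑ i, ‖(Submodule.orthogonalProjectionOnto (W i) (adjoint (T : H →L[𝕜] H) x) : H)‖ ^ 2 := by
  rw [Finset.mul_sum]
  refine Finset.sum_le_sum fun i _ => ?_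
  rw [← mul_pow]
  exact pow_le_pow_left₀ (norm_nonneg _) (proj_map_le (W i) T x) 2

lemma sum_proj_map_ge {N : ℕ} (W : Fin N → Submodule 𝕜 H) (T : H ≃L[𝕜] H) (x : H) :
    ∑ i, ‖(Submodule.orthogonalProjectionOnto (W i) (adjoint (T : H →L[𝕜] H) x) : H)‖ ^ 2 ≤
      ‖(T : H →L[𝕜] H)‖ ^ 2 *
        ∑ i, ‖(Submodule.orthogonalProjectionOnto ((W i).map ((T : H →L[𝕜] H) : H →ₗ[𝕜] H)) x : H)‖ ^ 2 := by
  rw [Finset.mul_sum]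
  refine Finset.sum_le_sum fun i _ => ?_
  rw [← mul_pow]
  exact pow_le_pow_left₀ (norm_nonneg _) (proj_map_ge (W i) T x) 2

lemma sum_proj_smul {N : ℕ} (W : Fin N → Submodule 𝕜 H) (c : ℝ) (x : H) :
    ∑ i, ‖(Submodule.orthogonalProjectionOnto (W i) (((c : ℝ) : 𝕜) • x) : H)‖ ^ 2 =
      c ^ 2 * ∑ i, ‖(Submodule.orthogonalProjectionOnto (W i) x : H)‖ ^ 2 := by
  rw [Finset.mul_sum]
  refine Finset.sum_congr rfl fun i _ => ?_
  rw [map_smul, Submodule.coe_smul, norm_smul, RCLike.norm_ofReal, mul_pow, sq_abs]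

lemma unit_mem {𝕜' H' : Type*} [RCLike 𝕜'] [NormedAddCommGroup H'] [InnerProductSpace 𝕜' H']
    {x : H'} (hx : x ≠ 0) : (((‖x‖⁻¹ : ℝ) : 𝕜') • x) ∈ Metric.sphere (0 : H') 1 := by
  rw [mem_sphere_zero_iff_norm, norm_smul, RCLike.norm_ofReal,
    abs_of_nonneg (by positivity), inv_mul_cancel₀ (norm_ne_zero_iff.mpr hx)]



end Aux

set_option maxHeartbeats 1600000 in
/-- For a fusion frame `W` on a finite-dimensional Hilbert space and an invertible
operator `T`, the redundancies satisfy
`R_W^± · k(T)⁻² ≤ R_{T(W)}^± ≤ R_W^± · k(T)²` with `k(T) = ‖T‖‖T⁻¹‖`. -/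
theorem redundancy_invertible_image_bounds
    {𝕜 H : Type*} [RCLike 𝕜] [NormedAddCommGroup H] [InnerProductSpace 𝕜 H]
    [FiniteDimensional 𝕜 H] [Nontrivial H]
    {N : ℕ} (W : Fin N → Submodule 𝕜 H) (v : Fin N → ℝ) (hv : ∀ i, 0 < v i)
    (A B : ℝ) (hA : 0 < A) (hAB : A ≤ B)
    (hframe : ∀ x : H,
      A * ‖x‖ ^ 2 ≤ ∑ i, (v i) ^ 2 * ‖(Submodule.orthogonalProjectionOnto (W i) x : H)‖ ^ 2 ∧
      ∑ i, (v i) ^ 2 * ‖(Submodule.orthogonalProjectionOnto (W i) x : H)‖ ^ 2 ≤ B * ‖x‖ ^ 2)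
    (T : H ≃L[𝕜] H) :
    ((⨅ x : Metric.sphere (0 : H) 1,
        ∑ i, ‖(Submodule.orthogonalProjectionOnto (W i) (x : H) : H)‖ ^ 2) *
      (‖(T : H →L[𝕜] H)‖ * ‖(T.symm : H →L[𝕜] H)‖) ^ (-2 : ℤ) ≤
      (⨅ x : Metric.sphere (0 : H) 1,
        ∑ i, ‖(Submodule.orthogonalProjectionOnto ((W i).map ((T : H →L[𝕜] H) : H →ₗ[𝕜] H))
          (x : H) : H)‖ ^ 2) ∧
      (⨅ x : Metric.sphere (0 : H) 1,
        ∑ i, ‖(Submodule.orthogonalProjectionOnto ((W i).map ((T : H →L[𝕜] H) : H →ₗ[𝕜] H))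
          (x : H) : H)‖ ^ 2) ≤
      (⨅ x : Metric.sphere (0 : H) 1,
        ∑ i, ‖(Submodule.orthogonalProjectionOnto (W i) (x : H) : H)‖ ^ 2) *
      (‖(T : H →L[𝕜] H)‖ * ‖(T.symm : H →L[𝕜] H)‖) ^ 2) ∧
    ((⨆ x : Metric.sphere (0 : H) 1,
        ∑ i, ‖(Submodule.orthogonalProjectionOnto (W i) (x : H) : H)‖ ^ 2) *
      (‖(T : H →L[𝕜] H)‖ * ‖(T.symm : H →L[𝕜] H)‖) ^ (-2 : ℤ) ≤
      (⨆ x : Metric.sphere (0 : H) 1,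
        ∑ i, ‖(Submodule.orthogonalProjectionOnto ((W i).map ((T : H →L[𝕜] H) : H →ₗ[𝕜] H))
          (x : H) : H)‖ ^ 2) ∧
      (⨆ x : Metric.sphere (0 : H) 1,
        ∑ i, ‖(Submodule.orthogonalProjectionOnto ((W i).map ((T : H →L[𝕜] H) : H →ₗ[𝕜] H))
          (x : H) : H)‖ ^ 2) ≤
      (⨆ x : Metric.sphere (0 : H) 1,
        ∑ i, ‖(Submodule.orthogonalProjectionOnto (W i) (x : H) : H)‖ ^ 2) *
      (‖(T : H →L[𝕜] H)‖ * ‖(T.symm : H →L[𝕜] H)‖) ^ 2) := by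
  haveI : CompleteSpace H := FiniteDimensional.complete 𝕜 H
  clear hframe hv hA hAB
  set F : H → ℝ := fun y => ∑ i, ‖(Submodule.orthogonalProjectionOnto (W i) y : H)‖ ^ 2 with hF
  set G : H → ℝ := fun y =>
    ∑ i, ‖(Submodule.orthogonalProjectionOnto ((W i).map ((T : H →L[𝕜] H) : H →ₗ[𝕜] H)) y : H)‖ ^ 2 with hG
  show ((⨅ x : Metric.sphere (0 : H) 1, F ↑x) *
      (‖(T : H →L[𝕜] H)‖ * ‖(T.symm : H →L[𝕜] H)‖) ^ (-2 : ℤ) ≤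
      (⨅ x : Metric.sphere (0 : H) 1, G ↑x) ∧
      (⨅ x : Metric.sphere (0 : H) 1, G ↑x) ≤
      (⨅ x : Metric.sphere (0 : H) 1, F ↑x) *
      (‖(T : H →L[𝕜] H)‖ * ‖(T.symm : H →L[𝕜] H)‖) ^ 2) ∧
    ((⨆ x : Metric.sphere (0 : H) 1, F ↑x) *
      (‖(T : H →L[𝕜] H)‖ * ‖(T.symm : H →L[𝕜] H)‖) ^ (-2 : ℤ) ≤
      (⨆ x : Metric.sphere (0 : H) 1, G ↑x) ∧
      (⨆ x : Metric.sphere (0 : H) 1, G ↑x) ≤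
      (⨆ x : Metric.sphere (0 : H) 1, F ↑x) *
      (‖(T : H →L[𝕜] H)‖ * ‖(T.symm : H →L[𝕜] H)‖) ^ 2)
  haveI hne : Nonempty (Metric.sphere (0 : H) 1) := by
    obtain ⟨x, hx⟩ := exists_ne (0 : H)
    exact ⟨⟨_, unit_mem (𝕜' := 𝕜) hx⟩⟩
  set nT := ‖(T : H →L[𝕜] H)‖ with hnT
  set nS := ‖(T.symm : H →L[𝕜] H)‖ with hnS
  set m := ⨅ x : Metric.sphere (0 : H) 1, F ↑x with hm
  set m' := ⨅ x : Metric.sphere (0 : H) 1, G ↑x with hm'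
  set M := ⨆ x : Metric.sphere (0 : H) 1, F ↑x with hM
  set M' := ⨆ x : Metric.sphere (0 : H) 1, G ↑x with hM'
  -- basic positivity of norms
  have hT0 : 0 < nT := by
    obtain ⟨x0, hx0⟩ := exists_ne (0 : H)
    have h1 : (T : H →L[𝕜] H) x0 ≠ 0 := by
      intro hc
      apply hx0
      have := congrArg (T.symm : H →L[𝕜] H) hc
      simpa using this
    have h2 := (T : H →L[𝕜] H).le_opNorm x0
    rw [← hnT] at h2
    have h3 : 0 < ‖(T : H →L[𝕜] H) x0‖ := norm_pos_iff.mpr h1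
    nlinarith [norm_pos_iff.mpr hx0]
  have hS0 : 0 < nS := by
    obtain ⟨x0, hx0⟩ := exists_ne (0 : H)
    have h1 : (T.symm : H →L[𝕜] H) x0 ≠ 0 := by
      intro hc
      apply hx0
      have := congrArg (T : H →L[𝕜] H) hc
      simpa using this
    have h2 := (T.symm : H →L[𝕜] H).le_opNorm x0
    rw [← hnS] at h2
    have h3 : 0 < ‖(T.symm : H →L[𝕜] H) x0‖ := norm_pos_iff.mpr h1
    nlinarith [norm_pos_iff.mpr hx0]
  have hk20 : (0:ℝ) < (nT * nS) ^ 2 := by positivity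
  have hzp : (nT * nS) ^ (-2 : ℤ) = ((nT * nS) ^ 2)⁻¹ := by rw [zpow_neg]; norm_cast
  rw [hzp]
  -- adjoints
  set Ta := ContinuousLinearMap.adjoint (T : H →L[𝕜] H) with hTadef
  set Sa := ContinuousLinearMap.adjoint (T.symm : H →L[𝕜] H) with hSadef
  have hTa_norm : ‖Ta‖ = nT := by
    rw [hTadef, hnT]; exact ContinuousLinearMap.adjoint.norm_map _
  have hSa_norm : ‖Sa‖ = nS := by
    rw [hSadef, hnS]; exact ContinuousLinearMap.adjoint.norm_map _
  have hTS : ∀ y : H, Ta (Sa y) = y := by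
    intro y
    refine ext_inner_right 𝕜 fun w => ?_
    rw [hTadef, hSadef, ContinuousLinearMap.adjoint_inner_left,
      ContinuousLinearMap.adjoint_inner_left]
    simp
  have hST : ∀ y : H, Sa (Ta y) = y := by
    intro y
    refine ext_inner_right 𝕜 fun w => ?_
    rw [hTadef, hSadef, ContinuousLinearMap.adjoint_inner_left,
      ContinuousLinearMap.adjoint_inner_left]
    simp
  -- basic facts about F and G
  have hFnn : ∀ y, 0 ≤ F y := fun y => Finset.sum_nonneg fun i _ => pow_nonneg (norm_nonneg _) 2
  have hGnn : ∀ y, 0 ≤ G y := fun y => Finset.sum_nonneg fun i _ => pow_nonneg (norm_nonneg _) 2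
  have hprojle : ∀ (V : Submodule 𝕜 H) (y : H), ‖(Submodule.orthogonalProjectionOnto V y : H)‖ ≤ ‖y‖ := by
    intro V y
    calc ‖(Submodule.orthogonalProjectionOnto V y : H)‖ = ‖Submodule.orthogonalProjectionOnto V y‖ := rfl
    _ ≤ ‖Submodule.orthogonalProjectionOnto V‖ * ‖y‖ := ContinuousLinearMap.le_opNorm _ _
    _ ≤ 1 * ‖y‖ := mul_le_mul_of_nonneg_right (Submodule.orthogonalProjectionOnto_norm_le V) (norm_nonneg _)
    _ = ‖y‖ := one_mul _
  have hFbd : ∀ x : Metric.sphere (0 : H) 1, F ↑x ≤ N := by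
    intro x
    have hx1 : ‖(x : H)‖ = 1 := mem_sphere_zero_iff_norm.mp x.2
    calc F ↑x ≤ ∑ _i : Fin N, (1:ℝ) := by
          refine Finset.sum_le_sum fun i _ => ?_
          have h := hprojle (W i) ↑x
          rw [hx1] at h
          nlinarith [norm_nonneg (Submodule.orthogonalProjectionOnto (W i) (↑x : H) : H)]
    _ = N := by simp
  have hGbd : ∀ x : Metric.sphere (0 : H) 1, G ↑x ≤ N := by
    intro x
    have hx1 : ‖(x : H)‖ = 1 := mem_sphere_zero_iff_norm.mp x.2
    calc G ↑x ≤ ∑ _i : Fin N, (1:ℝ) := by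
          refine Finset.sum_le_sum fun i _ => ?_
          have h := hprojle ((W i).map ((T : H →L[𝕜] H) : H →ₗ[𝕜] H)) ↑x
          rw [hx1] at h
          nlinarith [norm_nonneg
            (Submodule.orthogonalProjectionOnto ((W i).map ((T : H →L[𝕜] H) : H →ₗ[𝕜] H)) (↑x : H) : H)]
    _ = N := by simp
  have hmle : ∀ x : Metric.sphere (0 : H) 1, m ≤ F ↑x := fun x =>
    ciInf_le ⟨0, by rintro _ ⟨x, rfl⟩; exact hFnn _⟩ x
  have hm'le : ∀ x : Metric.sphere (0 : H) 1, m' ≤ G ↑x := fun x =>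
    ciInf_le ⟨0, by rintro _ ⟨x, rfl⟩; exact hGnn _⟩ x
  have hleM : ∀ x : Metric.sphere (0 : H) 1, F ↑x ≤ M := fun x =>
    le_ciSup ⟨(N : ℝ), by rintro _ ⟨x, rfl⟩; exact hFbd x⟩ x
  have hleM' : ∀ x : Metric.sphere (0 : H) 1, G ↑x ≤ M' := fun x =>
    le_ciSup ⟨(N : ℝ), by rintro _ ⟨x, rfl⟩; exact hGbd x⟩ x
  -- scaling and transfer
  have hscale : ∀ (c : ℝ) (y : H), F (((c : ℝ) : 𝕜) • y) = c ^ 2 * F y := fun c y =>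
    sum_proj_smul W c y
  have hGF : ∀ y : H, G y ≤ nS ^ 2 * F (Ta y) := by
    intro y
    have h := sum_proj_map_le W T y
    rw [← hnS, ← hTadef] at h
    exact h
  have hFG : ∀ y : H, F (Ta y) ≤ nT ^ 2 * G y := by
    intro y
    have h := sum_proj_map_ge W T y
    rw [← hnT, ← hTadef] at h
    exact h
  -- pointwise bounds for unit x
  have pointwise : ∀ x : Metric.sphere (0 : H) 1,
      m * ((nT * nS) ^ 2)⁻¹ ≤ G ↑x ∧ G ↑x ≤ M * (nT * nS) ^ 2 := by
    intro x
    have hx1 : ‖(x : H)‖ = 1 := mem_sphere_zero_iff_norm.mp x.2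
    have hyne : Ta ↑x ≠ 0 := by
      intro h
      have hx0 : (x : H) = 0 := by rw [← hST ↑x, h, map_zero]
      rw [hx0] at hx1; simp at hx1
    set y := Ta (↑x : H) with hydef
    have hu := unit_mem (𝕜' := 𝕜) hyne
    set u : Metric.sphere (0 : H) 1 := ⟨_, hu⟩ with hudef
    have hy0 : (0:ℝ) < ‖y‖ := norm_pos_iff.mpr hyne
    have hFy : F y = ‖y‖ ^ 2 * F ↑u := by
      show F y = ‖y‖ ^ 2 * F (((‖y‖⁻¹ : ℝ) : 𝕜) • y)
      have h1 : ‖y‖ ^ 2 * (‖y‖⁻¹) ^ 2 = 1 := by field_simp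
      rw [hscale, ← mul_assoc, h1, one_mul]
    have hyT : ‖y‖ ≤ nT := by
      have h := Ta.le_opNorm (↑x : H)
      rw [hTa_norm, hx1, mul_one] at h
      exact h
    have h1le : 1 ≤ nS * ‖y‖ := by
      have h := Sa.le_opNorm y
      rw [hSa_norm, hydef, hST, hx1] at h
      exact h
    constructor
    · have hkey : m ≤ (nT * nS) ^ 2 * G ↑x := by
        calc m ≤ F ↑u := hmle u
        _ ≤ (nS * ‖y‖) ^ 2 * F ↑u := le_mul_of_one_le_left (hFnn _) (by nlinarith)
        _ = nS ^ 2 * (‖y‖ ^ 2 * F ↑u) := by ring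
        _ = nS ^ 2 * F y := by rw [← hFy]
        _ ≤ nS ^ 2 * (nT ^ 2 * G ↑x) := mul_le_mul_of_nonneg_left (hFG ↑x) (by positivity)
        _ = (nT * nS) ^ 2 * G ↑x := by ring
      rw [mul_inv_le_iff₀ hk20]
      linarith
    · calc G ↑x ≤ nS ^ 2 * F y := hGF ↑x
      _ = nS ^ 2 * (‖y‖ ^ 2 * F ↑u) := by rw [hFy]
      _ ≤ nS ^ 2 * (nT ^ 2 * M) := by
          have h1 : ‖y‖ ^ 2 * F ↑u ≤ nT ^ 2 * M :=
            mul_le_mul (pow_le_pow_left₀ (norm_nonneg _) hyT 2) (hleM u) (hFnn _) (by positivity)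
          exact mul_le_mul_of_nonneg_left h1 (by positivity)
      _ = M * (nT * nS) ^ 2 := by ring
  -- bounds obtained by pulling back unit vectors
  have pair : ∀ x : Metric.sphere (0 : H) 1,
      m' ≤ (nT * nS) ^ 2 * F ↑x ∧ F ↑x ≤ (nT * nS) ^ 2 * M' := by
    intro y0
    have hy1 : ‖(y0 : H)‖ = 1 := mem_sphere_zero_iff_norm.mp y0.2
    set z := Sa (↑y0 : H) with hzdef
    have hTz : Ta z = ↑y0 := hTS ↑y0
    have hzne : z ≠ 0 := by
      intro h
      rw [h, map_zero] at hTz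
      rw [← hTz] at hy1; simp at hy1
    have hz0 : (0:ℝ) < ‖z‖ := norm_pos_iff.mpr hzne
    set x : Metric.sphere (0 : H) 1 := ⟨_, unit_mem (𝕜' := 𝕜) hzne⟩ with hxdef
    have hTax : Ta ↑x = ((‖z‖⁻¹ : ℝ) : 𝕜) • (↑y0 : H) := by
      show Ta (((‖z‖⁻¹ : ℝ) : 𝕜) • z) = _
      rw [map_smul, hTz]
    have hFTax : F (Ta ↑x) = (‖z‖⁻¹) ^ 2 * F ↑y0 := by rw [hTax]; exact hscale _ _
    have hz_le : ‖z‖ ≤ nS := by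
      have h := Sa.le_opNorm (↑y0 : H)
      rw [hSa_norm, hy1, mul_one] at h
      exact h
    have hzinv_le : ‖z‖⁻¹ ≤ nT := by
      have h := Ta.le_opNorm z
      rw [hTa_norm, hTz, hy1] at h
      nlinarith [mul_inv_cancel₀ hz0.ne']
    constructor
    · calc m' ≤ G ↑x := hm'le x
      _ ≤ nS ^ 2 * F (Ta ↑x) := hGF ↑x
      _ = nS ^ 2 * ((‖z‖⁻¹) ^ 2 * F ↑y0) := by rw [hFTax]
      _ ≤ nS ^ 2 * (nT ^ 2 * F ↑y0) := by
          have h1 : (‖z‖⁻¹) ^ 2 * F ↑y0 ≤ nT ^ 2 * F ↑y0 :=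
            mul_le_mul_of_nonneg_right (pow_le_pow_left₀ (by positivity) hzinv_le 2) (hFnn _)
          exact mul_le_mul_of_nonneg_left h1 (by positivity)
      _ = (nT * nS) ^ 2 * F ↑y0 := by ring
    · have hstart : F ↑y0 = ‖z‖ ^ 2 * F (Ta ↑x) := by
        have h1 : ‖z‖ ^ 2 * (‖z‖⁻¹) ^ 2 = 1 := by field_simp
        rw [hFTax, ← mul_assoc, h1, one_mul]
      calc F ↑y0 = ‖z‖ ^ 2 * F (Ta ↑x) := hstart
      _ ≤ ‖z‖ ^ 2 * (nT ^ 2 * G ↑x) := mul_le_mul_of_nonneg_left (hFG ↑x) (by positivity)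
      _ ≤ nS ^ 2 * (nT ^ 2 * M') := by
          have h2 : nT ^ 2 * G ↑x ≤ nT ^ 2 * M' :=
            mul_le_mul_of_nonneg_left (hleM' x) (by positivity)
          have h3 : ‖z‖ ^ 2 ≤ nS ^ 2 := pow_le_pow_left₀ (norm_nonneg _) hz_le 2
          exact mul_le_mul h3 h2 (by positivity) (by positivity)
      _ = (nT * nS) ^ 2 * M' := by ring
  -- assemble the four inequalities
  have part1 : m * ((nT * nS) ^ 2)⁻¹ ≤ m' := by
    rw [hm']
    exact le_ciInf fun x => (pointwise x).1
  have part4 : M' ≤ M * (nT * nS) ^ 2 := by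
    rw [hM']
    exact ciSup_le fun x => (pointwise x).2
  have part2 : m' ≤ m * (nT * nS) ^ 2 := by
    have h : m' * ((nT * nS) ^ 2)⁻¹ ≤ m := by
      rw [hm]
      refine le_ciInf fun x => ?_
      rw [mul_inv_le_iff₀ hk20]
      linarith [(pair x).1]
    rw [mul_inv_le_iff₀ hk20] at h
    linarith
  have part3 : M * ((nT * nS) ^ 2)⁻¹ ≤ M' := by
    have h : M ≤ (nT * nS) ^ 2 * M' := by
      rw [hM]
      exact ciSup_le fun x => (pair x).2
    rw [mul_inv_le_iff₀ hk20]
    linarith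
  exact ⟨⟨part1, part2⟩, ⟨part3, part4⟩⟩
end

section
/- Let Φ = {φ_i}_{i=1}^N be a frame for Hⁿ with frame operator S_Φ, and let Ψ = {S_Φ⁻¹ φ_i}_{i=1}^N be the canonical dual frame. Then the redundancies satisfy R_Φ^± · k(S_Φ)⁻² ≤ R_Ψ^± ≤ R_Φ^± · k(S_Φ)², where k(S_Φ) = ‖S_Φ‖·‖S_Φ⁻¹‖. -/
open scoped InnerProductSpace

section RedundancyAux

variable {𝕜 H : Type*} [RCLike 𝕜] [NormedAddCommGroup H] [InnerProductSpace 𝕜 H]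
  [Nontrivial H] {N : ℕ}

omit [Nontrivial H] in
private lemma red_pointwise (φ ψ : Fin N → H) (hne : ∀ i, φ i ≠ 0)
    (S : H ≃L[𝕜] H) (hψ : ∀ i, ψ i = S.symm (φ i))
    (hsym : ∀ u v : H, ⟪S.symm u, v⟫_𝕜 = ⟪u, S.symm v⟫_𝕜)
    (x : H) (hx : ‖x‖ = 1) :
    ∃ y : H, ‖y‖ = 1 ∧
      ((∑ i, ‖⟪φ i, y⟫_𝕜‖ ^ 2 / ‖φ i‖ ^ 2) /
          (‖(S : H →L[𝕜] H)‖ * ‖(S.symm : H →L[𝕜] H)‖) ^ 2 ≤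
        ∑ i, ‖⟪ψ i, x⟫_𝕜‖ ^ 2 / ‖ψ i‖ ^ 2) ∧
      (∑ i, ‖⟪ψ i, x⟫_𝕜‖ ^ 2 / ‖ψ i‖ ^ 2 ≤
        (‖(S : H →L[𝕜] H)‖ * ‖(S.symm : H →L[𝕜] H)‖) ^ 2 *
          ∑ i, ‖⟪φ i, y⟫_𝕜‖ ^ 2 / ‖φ i‖ ^ 2) := by
  set a := ‖(S : H →L[𝕜] H)‖ with ha
  set b := ‖(S.symm : H →L[𝕜] H)‖ with hb
  have hxne : x ≠ 0 := by intro h; rw [h, norm_zero] at hx; norm_num at hx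
  have hvne : S.symm x ≠ 0 := fun h => hxne (by simpa using congrArg S h)
  set v : H := S.symm x with hv
  set t : ℝ := ‖v‖ with htdef
  have ht : 0 < t := norm_pos_iff.2 hvne
  set y : H := ((t : 𝕜))⁻¹ • v with hy
  have hy1 : ‖y‖ = 1 := by
    rw [hy, norm_smul]
    simp [RCLike.norm_ofReal, abs_of_pos ht, inv_mul_cancel₀ ht.ne']
    exact inv_mul_cancel₀ ht.ne'
  have hat : 1 ≤ a * t := by
    calc (1:ℝ) = ‖x‖ := hx.symm
    _ = ‖(S : H →L[𝕜] H) v‖ := by rw [hv]; simp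
    _ ≤ a * t := (S : H →L[𝕜] H).le_opNorm v
  have hta : 0 < a := by
    nlinarith [norm_nonneg (S : H →L[𝕜] H), norm_nonneg v]
  have htb : t ≤ b := by
    calc t = ‖(S.symm : H →L[𝕜] H) x‖ := rfl
    _ ≤ b * ‖x‖ := (S.symm : H →L[𝕜] H).le_opNorm x
    _ = b := by rw [hx, mul_one]
  have htbpos : 0 < b := lt_of_lt_of_le ht htb
  have hinner : ∀ i, ‖⟪ψ i, x⟫_𝕜‖ = t * ‖⟪φ i, y⟫_𝕜‖ := by
    intro i
    have h1 : ⟪ψ i, x⟫_𝕜 = ⟪φ i, v⟫_𝕜 := by rw [hψ i, hsym, hv]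
    have h2 : v = (t : 𝕜) • y := by
      rw [hy, smul_smul, mul_inv_cancel₀ (by exact_mod_cast ht.ne' : (t:𝕜) ≠ 0), one_smul]
    rw [h1, h2, inner_smul_right, norm_mul, RCLike.norm_ofReal, abs_of_pos ht]
  have hterm : ∀ i,
      (‖⟪φ i, y⟫_𝕜‖ ^ 2 / ‖φ i‖ ^ 2) / (a * b) ^ 2 ≤
        ‖⟪ψ i, x⟫_𝕜‖ ^ 2 / ‖ψ i‖ ^ 2 ∧
      ‖⟪ψ i, x⟫_𝕜‖ ^ 2 / ‖ψ i‖ ^ 2 ≤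
        (a * b) ^ 2 * (‖⟪φ i, y⟫_𝕜‖ ^ 2 / ‖φ i‖ ^ 2) := by
    intro i
    have hφpos : 0 < ‖φ i‖ := norm_pos_iff.2 (hne i)
    have hψne : ψ i ≠ 0 := by
      rw [hψ i]
      exact fun h => hne i (by simpa using congrArg S h)
    have hψpos : 0 < ‖ψ i‖ := norm_pos_iff.2 hψne
    have hup : ‖φ i‖ ≤ a * ‖ψ i‖ := by
      calc ‖φ i‖ = ‖(S : H →L[𝕜] H) (ψ i)‖ := by rw [hψ i]; simp
      _ ≤ a * ‖ψ i‖ := (S : H →L[𝕜] H).le_opNorm _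
    have hlo : ‖ψ i‖ ≤ b * ‖φ i‖ := by
      calc ‖ψ i‖ = ‖(S.symm : H →L[𝕜] H) (φ i)‖ := by rw [hψ i]; rfl
      _ ≤ b * ‖φ i‖ := (S.symm : H →L[𝕜] H).le_opNorm _
    rw [hinner i]
    set c := ‖⟪φ i, y⟫_𝕜‖ with hc
    have hc0 : 0 ≤ c := norm_nonneg _
    constructor
    · rw [div_div, div_le_div_iff₀ (by positivity) (by positivity)]
      have key : ‖ψ i‖ ≤ (a * b) * (t * ‖φ i‖) := by
        calc ‖ψ i‖ ≤ b * ‖φ i‖ := hlo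
        _ = 1 * (b * ‖φ i‖) := (one_mul _).symm
        _ ≤ (a * t) * (b * ‖φ i‖) := by
            apply mul_le_mul_of_nonneg_right hat (by positivity)
        _ = (a * b) * (t * ‖φ i‖) := by ring
      have key2 : ‖ψ i‖ ^ 2 ≤ ((a * b) * (t * ‖φ i‖)) ^ 2 :=
        pow_le_pow_left₀ hψpos.le key 2
      nlinarith [mul_le_mul_of_nonneg_left key2 (sq_nonneg c)]
    · rw [← mul_div_assoc, div_le_div_iff₀ (by positivity) (by positivity)]
      have key : t * ‖φ i‖ ≤ (a * b) * ‖ψ i‖ := by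
        calc t * ‖φ i‖ ≤ b * (a * ‖ψ i‖) :=
          mul_le_mul htb hup (by positivity) (by positivity)
        _ = (a * b) * ‖ψ i‖ := by ring
      have key2 : (t * ‖φ i‖) ^ 2 ≤ ((a * b) * ‖ψ i‖) ^ 2 :=
        pow_le_pow_left₀ (by positivity) key 2
      nlinarith [mul_le_mul_of_nonneg_left key2 (sq_nonneg c)]
  refine ⟨y, hy1, ?_, ?_⟩
  · calc (∑ i, ‖⟪φ i, y⟫_𝕜‖ ^ 2 / ‖φ i‖ ^ 2) / (a * b) ^ 2
        = ∑ i, (‖⟪φ i, y⟫_𝕜‖ ^ 2 / ‖φ i‖ ^ 2) / (a * b) ^ 2 := Finset.sum_div _ _ _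
    _ ≤ ∑ i, ‖⟪ψ i, x⟫_𝕜‖ ^ 2 / ‖ψ i‖ ^ 2 := Finset.sum_le_sum fun i _ => (hterm i).1
  · calc (∑ i, ‖⟪ψ i, x⟫_𝕜‖ ^ 2 / ‖ψ i‖ ^ 2)
        ≤ ∑ i, (a * b) ^ 2 * (‖⟪φ i, y⟫_𝕜‖ ^ 2 / ‖φ i‖ ^ 2) :=
          Finset.sum_le_sum fun i _ => (hterm i).2
    _ = (a * b) ^ 2 * ∑ i, ‖⟪φ i, y⟫_𝕜‖ ^ 2 / ‖φ i‖ ^ 2 := (Finset.mul_sum _ _ _).symm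

private lemma red_bounds (φ ψ : Fin N → H) (hne : ∀ i, φ i ≠ 0)
    (S : H ≃L[𝕜] H)
    (hpt : ∀ x : H, ‖x‖ = 1 → ∃ y : H, ‖y‖ = 1 ∧
      ((∑ i, ‖⟪φ i, y⟫_𝕜‖ ^ 2 / ‖φ i‖ ^ 2) /
          (‖(S : H →L[𝕜] H)‖ * ‖(S.symm : H →L[𝕜] H)‖) ^ 2 ≤
        ∑ i, ‖⟪ψ i, x⟫_𝕜‖ ^ 2 / ‖ψ i‖ ^ 2) ∧
      (∑ i, ‖⟪ψ i, x⟫_𝕜‖ ^ 2 / ‖ψ i‖ ^ 2 ≤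
        (‖(S : H →L[𝕜] H)‖ * ‖(S.symm : H →L[𝕜] H)‖) ^ 2 *
          ∑ i, ‖⟪φ i, y⟫_𝕜‖ ^ 2 / ‖φ i‖ ^ 2)) :
    ((⨅ x : Metric.sphere (0 : H) 1, ∑ i, ‖⟪φ i, (x : H)⟫_𝕜‖ ^ 2 / ‖φ i‖ ^ 2) /
        (‖(S : H →L[𝕜] H)‖ * ‖(S.symm : H →L[𝕜] H)‖) ^ 2 ≤
      ⨅ x : Metric.sphere (0 : H) 1, ∑ i, ‖⟪ψ i, (x : H)⟫_𝕜‖ ^ 2 / ‖ψ i‖ ^ 2) ∧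
    ((⨆ x : Metric.sphere (0 : H) 1, ∑ i, ‖⟪ψ i, (x : H)⟫_𝕜‖ ^ 2 / ‖ψ i‖ ^ 2) ≤
      (⨆ x : Metric.sphere (0 : H) 1, ∑ i, ‖⟪φ i, (x : H)⟫_𝕜‖ ^ 2 / ‖φ i‖ ^ 2) *
        (‖(S : H →L[𝕜] H)‖ * ‖(S.symm : H →L[𝕜] H)‖) ^ 2) := by
  haveI hnex : Nonempty (Metric.sphere (0 : H) 1) :=
    NormedSpace.sphere_nonempty_rclike 𝕜 zero_le_one
  set a := ‖(S : H →L[𝕜] H)‖ with ha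
  set b := ‖(S.symm : H →L[𝕜] H)‖ with hb
  set fφ : Metric.sphere (0 : H) 1 → ℝ :=
    fun x => ∑ i, ‖⟪φ i, (x : H)⟫_𝕜‖ ^ 2 / ‖φ i‖ ^ 2 with hfφ
  set fψ : Metric.sphere (0 : H) 1 → ℝ :=
    fun x => ∑ i, ‖⟪ψ i, (x : H)⟫_𝕜‖ ^ 2 / ‖ψ i‖ ^ 2 with hfψ
  have x0 : Metric.sphere (0 : H) 1 := hnex.some
  have hx0 : ‖(x0 : H)‖ = 1 := by
    have := x0.2
    rwa [mem_sphere_zero_iff_norm] at this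
  have hk : 0 < (a * b) ^ 2 := by
    have h1 : (1:ℝ) ≤ b * (a * 1) := by
      calc (1:ℝ) = ‖(x0 : H)‖ := hx0.symm
      _ = ‖(S.symm : H →L[𝕜] H) ((S : H →L[𝕜] H) (x0:H))‖ := by simp
      _ ≤ b * ‖(S : H →L[𝕜] H) (x0:H)‖ := (S.symm : H →L[𝕜] H).le_opNorm _
      _ ≤ b * (a * ‖(x0:H)‖) := by
          apply mul_le_mul_of_nonneg_left ((S : H →L[𝕜] H).le_opNorm _) (norm_nonneg _)
      _ = b * (a * 1) := by rw [hx0]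
    nlinarith
  have hbddb : BddBelow (Set.range fφ) := by
    refine ⟨0, ?_⟩
    rintro z ⟨x, rfl⟩
    positivity
  have hbdda : BddAbove (Set.range fφ) := by
    refine ⟨(N : ℝ), ?_⟩
    rintro z ⟨x, rfl⟩
    have hx : ‖(x : H)‖ = 1 := by
      have := x.2; rwa [mem_sphere_zero_iff_norm] at this
    calc fφ x ≤ ∑ _i : Fin N, (1:ℝ) := by
          apply Finset.sum_le_sum
          intro i _
          have hφpos : 0 < ‖φ i‖ := norm_pos_iff.2 (hne i)
          rw [div_le_one (by positivity)]
          apply pow_le_pow_left₀ (norm_nonneg _)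
          calc ‖⟪φ i, (x:H)⟫_𝕜‖ ≤ ‖φ i‖ * ‖(x:H)‖ := norm_inner_le_norm _ _
          _ = ‖φ i‖ := by rw [hx, mul_one]
    _ = N := by simp
  constructor
  · apply le_ciInf
    intro x
    have hx : ‖(x : H)‖ = 1 := by
      have := x.2; rwa [mem_sphere_zero_iff_norm] at this
    obtain ⟨y, hy1, h1, _⟩ := hpt (x : H) hx
    refine le_trans ?_ h1
    apply div_le_div_of_nonneg_right ?_ hk.le
    exact ciInf_le hbddb ⟨y, mem_sphere_zero_iff_norm.2 hy1⟩
  · apply ciSup_le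
    intro x
    have hx : ‖(x : H)‖ = 1 := by
      have := x.2; rwa [mem_sphere_zero_iff_norm] at this
    obtain ⟨y, hy1, _, h2⟩ := hpt (x : H) hx
    refine le_trans h2 ?_
    rw [mul_comm]
    apply mul_le_mul_of_nonneg_right ?_ hk.le
    exact le_ciSup hbdda ⟨y, mem_sphere_zero_iff_norm.2 hy1⟩

end RedundancyAux

/-- For a frame `Φ = {φ_i}` for a finite-dimensional Hilbert space with frame operator
`S_Φ` and canonical dual `Ψ = {S_Φ⁻¹ φ_i}`, the redundancies satisfy
`R_Φ^± · k(S_Φ)⁻² ≤ R_Ψ^± ≤ R_Φ^± · k(S_Φ)²` with `k(S_Φ) = ‖S_Φ‖‖S_Φ⁻¹‖`. -/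
theorem redundancy_canonical_dual_bounds
    {𝕜 H : Type*} [RCLike 𝕜] [NormedAddCommGroup H] [InnerProductSpace 𝕜 H]
    [FiniteDimensional 𝕜 H] [Nontrivial H]
    {N : ℕ} (φ : Fin N → H) (hne : ∀ i, φ i ≠ 0)
    (hspan : Submodule.span 𝕜 (Set.range φ) = ⊤)
    (S : H ≃L[𝕜] H) (hS : ∀ x : H, S x = ∑ i, ⟪φ i, x⟫_𝕜 • φ i)
    (ψ : Fin N → H) (hψ : ∀ i, ψ i = S.symm (φ i)) :
    ((⨅ x : Metric.sphere (0 : H) 1, ∑ i, ‖⟪φ i, (x : H)⟫_𝕜‖ ^ 2 / ‖φ i‖ ^ 2) *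
        (‖(S : H →L[𝕜] H)‖ * ‖(S.symm : H →L[𝕜] H)‖) ^ (-2 : ℤ) ≤
      (⨅ x : Metric.sphere (0 : H) 1, ∑ i, ‖⟪ψ i, (x : H)⟫_𝕜‖ ^ 2 / ‖ψ i‖ ^ 2) ∧
      (⨅ x : Metric.sphere (0 : H) 1, ∑ i, ‖⟪ψ i, (x : H)⟫_𝕜‖ ^ 2 / ‖ψ i‖ ^ 2) ≤
      (⨅ x : Metric.sphere (0 : H) 1, ∑ i, ‖⟪φ i, (x : H)⟫_𝕜‖ ^ 2 / ‖φ i‖ ^ 2) *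
        (‖(S : H →L[𝕜] H)‖ * ‖(S.symm : H →L[𝕜] H)‖) ^ 2) ∧
    ((⨆ x : Metric.sphere (0 : H) 1, ∑ i, ‖⟪φ i, (x : H)⟫_𝕜‖ ^ 2 / ‖φ i‖ ^ 2) *
        (‖(S : H →L[𝕜] H)‖ * ‖(S.symm : H →L[𝕜] H)‖) ^ (-2 : ℤ) ≤
      (⨆ x : Metric.sphere (0 : H) 1, ∑ i, ‖⟪ψ i, (x : H)⟫_𝕜‖ ^ 2 / ‖ψ i‖ ^ 2) ∧
      (⨆ x : Metric.sphere (0 : H) 1, ∑ i, ‖⟪ψ i, (x : H)⟫_𝕜‖ ^ 2 / ‖ψ i‖ ^ 2) ≤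
      (⨆ x : Metric.sphere (0 : H) 1, ∑ i, ‖⟪φ i, (x : H)⟫_𝕜‖ ^ 2 / ‖φ i‖ ^ 2) *
        (‖(S : H →L[𝕜] H)‖ * ‖(S.symm : H →L[𝕜] H)‖) ^ 2) := by
  have hsym0 : ∀ u v : H, ⟪S u, v⟫_𝕜 = ⟪u, S v⟫_𝕜 := by
    intro u v
    rw [hS u, hS v, sum_inner, inner_sum]
    refine Finset.sum_congr rfl fun i _ => ?_
    rw [inner_smul_left, inner_smul_right, ← inner_conj_symm u (φ i)]
    ring
  have hsym : ∀ u v : H, ⟪S.symm u, v⟫_𝕜 = ⟪u, S.symm v⟫_𝕜 := by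
    intro u v
    calc ⟪S.symm u, v⟫_𝕜 = ⟪S.symm u, S (S.symm v)⟫_𝕜 := by rw [S.apply_symm_apply]
    _ = ⟪S (S.symm u), S.symm v⟫_𝕜 := (hsym0 _ _).symm
    _ = ⟪u, S.symm v⟫_𝕜 := by rw [S.apply_symm_apply]
  have hneψ : ∀ i, ψ i ≠ 0 := by
    intro i h
    rw [hψ i] at h
    exact hne i (by simpa using congrArg S h)
  have hψ' : ∀ i, φ i = S.symm.symm (ψ i) := by intro i; rw [hψ i]; simp
  have hsym' : ∀ u v : H, ⟪S.symm.symm u, v⟫_𝕜 = ⟪u, S.symm.symm v⟫_𝕜 := by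
    simpa [ContinuousLinearEquiv.symm_symm] using hsym0
  obtain ⟨I1, S1⟩ := red_bounds φ ψ hne S
    (fun x hx => red_pointwise φ ψ hne S hψ hsym x hx)
  obtain ⟨I2, S2⟩ := red_bounds ψ φ hneψ S.symm
    (fun x hx => red_pointwise ψ φ hneψ S.symm hψ' hsym' x hx)
  rw [ContinuousLinearEquiv.symm_symm,
    mul_comm ‖(S.symm : H →L[𝕜] H)‖ ‖(S : H →L[𝕜] H)‖] at I2 S2
  set k := ‖(S : H →L[𝕜] H)‖ * ‖(S.symm : H →L[𝕜] H)‖ with hkdef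
  have hkpos : 0 < k ^ 2 := by
    haveI hnex : Nonempty (Metric.sphere (0 : H) 1) :=
      NormedSpace.sphere_nonempty_rclike 𝕜 zero_le_one
    have x0 : Metric.sphere (0 : H) 1 := hnex.some
    have hx0 : ‖(x0 : H)‖ = 1 := by
      have := x0.2; rwa [mem_sphere_zero_iff_norm] at this
    have h1 : (1:ℝ) ≤ ‖(S.symm : H →L[𝕜] H)‖ * (‖(S : H →L[𝕜] H)‖ * 1) := by
      calc (1:ℝ) = ‖(x0 : H)‖ := hx0.symm
      _ = ‖(S.symm : H →L[𝕜] H) ((S : H →L[𝕜] H) (x0:H))‖ := by simp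
      _ ≤ ‖(S.symm : H →L[𝕜] H)‖ * ‖(S : H →L[𝕜] H) (x0:H)‖ :=
          (S.symm : H →L[𝕜] H).le_opNorm _
      _ ≤ ‖(S.symm : H →L[𝕜] H)‖ * (‖(S : H →L[𝕜] H)‖ * ‖(x0:H)‖) := by
          apply mul_le_mul_of_nonneg_left ((S : H →L[𝕜] H).le_opNorm _) (norm_nonneg _)
      _ = _ := by rw [hx0]
    nlinarith
  have hzp : k ^ (-2 : ℤ) = (k ^ 2)⁻¹ := by rw [zpow_neg]; norm_cast
  refine ⟨⟨?_, ?_⟩, ?_, ?_⟩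
  · rw [hzp, ← div_eq_mul_inv]; exact I1
  · exact (div_le_iff₀ hkpos).1 I2
  · rw [hzp, ← div_eq_mul_inv]; exact (div_le_iff₀ hkpos).2 S2
  · exact S1
end
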